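/- arXiv:2404.17708 — 9 statements merged into one kernel-verified Lean document; each statement's English description precedes it below -/
import Mathlib

section
/- Let (g,[·,·]) be a Lie algebra and n: g → g a linear map. Then the deformed bracket [ξ₁,ξ₂]_n = [nξ₁,ξ₂] + [ξ₁,nξ₂] − n[ξ₁,ξ₂] satisfies the Jacobi identity (i.e. defines a Lie bracket) if and only if the Nijenhuis torsion T(n) is a 2-cocycle for the Chevalley–Eilenberg cohomology with values in the adjoint representation. -/
/-- The deformed bracket `[·,·]_n` satisfies the Jacobi identity iff the
Nijenhuis torsion of `n` is a 2-cocycle for the Chevalley–Eilenberg cohomology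
with values in the adjoint representation. -/
theorem deformed_jacobi_iff_torsion_two_cocycle
    {g : Type*} [LieRing g] [LieAlgebra ℝ g]
    (n : g →ₗ[ℝ] g)
    (nbr : g → g → g)
    (hnbr : ∀ x y, nbr x y = ⁅n x, y⁆ + ⁅x, n y⁆ - n ⁅x, y⁆)
    (T : g → g → g)
    (hT : ∀ x y, T x y = n (nbr x y) - ⁅n x, n y⁆) :
    (∀ x y z, nbr (nbr x y) z + nbr (nbr z x) y + nbr (nbr y z) x = 0) ↔
    (∀ x y z,
      ⁅x, T y z⁆ - ⁅y, T x z⁆ + ⁅z, T x y⁆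
        - T ⁅x, y⁆ z + T ⁅x, z⁆ y - T ⁅y, z⁆ x = 0) := by
  have key : ∀ x y z : g,
      ⁅x, T y z⁆ - ⁅y, T x z⁆ + ⁅z, T x y⁆
        - T ⁅x, y⁆ z + T ⁅x, z⁆ y - T ⁅y, z⁆ x
      = -(nbr (nbr x y) z + nbr (nbr z x) y + nbr (nbr y z) x) := by
    intro x y z
    have jac : ∀ a b c : g, ⁅a, ⁅b, c⁆⁆ = ⁅b, ⁅a, c⁆⁆ - ⁅c, ⁅a, b⁆⁆ := by
      intro a b c
      rw [leibniz_lie, ← lie_skew ⁅a, b⁆ c]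
      abel
    have hx : ∀ a : g, ⁅a, x⁆ = -⁅x, a⁆ := fun a => (lie_skew a x).symm
    have h2 : ∀ a : g, ⁅n a, y⁆ = -⁅y, n a⁆ := fun a => (lie_skew (n a) y).symm
    have h3 : ∀ a : g, ⁅n a, z⁆ = -⁅z, n a⁆ := fun a => (lie_skew (n a) z).symm
    have hzy : (⁅z, y⁆ : g) = -⁅y, z⁆ := (lie_skew z y).symm
    have k1 : (⁅n z, n y⁆ : g) = -⁅n y, n z⁆ := (lie_skew (n z) (n y)).symm
    simp only [hT, hnbr, map_add, map_sub, add_lie, sub_lie, lie_add, lie_sub, lie_lie]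
    simp only [hx, h2, h3, hzy, k1, map_neg, neg_neg, lie_neg, neg_lie, map_sub, map_add,
      lie_add, add_lie, lie_sub, sub_lie]
    simp only [jac x y (n z), jac x z (n y), jac y z (n x), jac x y z,
      jac x (n y) (n z), jac y (n z) (n x), jac z (n y) (n x),
      map_sub, lie_sub, sub_lie]
    abel
  constructor
  · intro h x y z
    rw [key, h, neg_zero]
  · intro h x y z
    have h0 := h x y z
    rw [key, neg_eq_zero] at h0
    exact h0
end

section
/- Let n be a Nijenhuis operator on a Lie algebra (g,[·,·]). Then for every natural number k ≥ 1, \underline{ad}_{n^k ξ} = n^k ∘ \underline{ad}_ξ for all ξ ∈ g, where \underline{ad}_ξ = ad_ξ ∘ n − n ∘ ad_ξ. -/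
/-- For a Nijenhuis operator `n` and every `k ≥ 1`,
`\underline{ad}_{n^k ξ} = n^k ∘ \underline{ad}_ξ`. -/
theorem underline_ad_pow
    {g : Type*} [LieRing g] [LieAlgebra ℝ g]
    (n : Module.End ℝ g)
    (hN : ∀ x y, n (⁅n x, y⁆ + ⁅x, n y⁆ - n ⁅x, y⁆) = ⁅n x, n y⁆) :
    ∀ k : ℕ, 1 ≤ k → ∀ ξ ζ : g,
      ⁅(n ^ k) ξ, n ζ⁆ - n ⁅(n ^ k) ξ, ζ⁆ = (n ^ k) (⁅ξ, n ζ⁆ - n ⁅ξ, ζ⁆) := by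
  have base : ∀ ξ ζ : g, ⁅n ξ, n ζ⁆ - n ⁅n ξ, ζ⁆ = n (⁅ξ, n ζ⁆ - n ⁅ξ, ζ⁆) := by
    intro ξ ζ
    rw [← hN ξ ζ]
    simp only [map_add, map_sub]
    abel
  intro k hk
  induction k with
  | zero => omega
  | succ m ih =>
    intro ξ ζ
    rcases Nat.eq_zero_or_pos m with hm | hm
    · subst hm; simpa [pow_one] using base ξ ζ
    · have hmul : ∀ x : g, (n ^ (m + 1)) x = (n ^ m) (n x) := by
        intro x; rw [pow_succ]; rfl
      rw [hmul ξ, ih hm (n ξ) ζ, base ξ ζ, ← hmul]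
end

section
/- Let n be a linear operator on a Lie algebra (g,[·,·]). For any k ≥ 2, the Nijenhuis torsion of n^k satisfies: T(n^k)(ξ₁,ξ₂) = n^{k−1}[T(n)(n^{k−1}ξ₁,ξ₂) + T(n)(ξ₁,n^{k−1}ξ₂)] + T(n^{k−1})(nξ₁,nξ₂) + n² T(n^{k−1})(ξ₁,ξ₂) − n² T(n^{k−2})(nξ₁,nξ₂), where T(m)(ξ₁,ξ₂) = m([mξ₁,ξ₂]+[ξ₁,mξ₂]−m[ξ₁,ξ₂]) − [mξ₁,mξ₂]. In particular, if T(n) = 0 then T(n^k) = 0 for all k. -/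
/-- Recurrence for the Nijenhuis torsion of powers `n^k` (`k ≥ 2`); in
particular, if `T(n) = 0` then `T(n^k) = 0` for all `k`. -/
theorem torsion_pow_recurrence
    {g : Type*} [LieRing g] [LieAlgebra ℝ g]
    (n : Module.End ℝ g)
    (T : Module.End ℝ g → g → g → g)
    (hT : ∀ (m : Module.End ℝ g) (x y : g),
      T m x y = m ⁅m x, y⁆ + m ⁅x, m y⁆ - m (m ⁅x, y⁆) - ⁅m x, m y⁆) :
    (∀ k : ℕ, 2 ≤ k → ∀ x y : g,
      T (n ^ k) x y
        = (n ^ (k - 1)) (T n ((n ^ (k - 1)) x) y + T n x ((n ^ (k - 1)) y))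
          + T (n ^ (k - 1)) (n x) (n y)
          + (n ^ 2) (T (n ^ (k - 1)) x y)
          - (n ^ 2) (T (n ^ (k - 2)) (n x) (n y)))
    ∧ ((∀ x y : g, T n x y = 0) → ∀ (k : ℕ) (x y : g), T (n ^ k) x y = 0) := by
  have comm : ∀ (m : ℕ) (z : g), n ((n ^ m) z) = (n ^ m) (n z) := by
    intro m z
    rw [← Module.End.mul_apply, ← pow_succ', pow_succ, Module.End.mul_apply]
  have main : ∀ k : ℕ, 2 ≤ k → ∀ x y : g,
      T (n ^ k) x y
        = (n ^ (k - 1)) (T n ((n ^ (k - 1)) x) y + T n x ((n ^ (k - 1)) y))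
          + T (n ^ (k - 1)) (n x) (n y)
          + (n ^ 2) (T (n ^ (k - 1)) x y)
          - (n ^ 2) (T (n ^ (k - 2)) (n x) (n y)) := by
    intro k hk x y
    obtain ⟨m, rfl⟩ : ∃ m, k = m + 2 := ⟨k - 2, by omega⟩
    have h1 : m + 2 - 1 = m + 1 := rfl
    have h2 : m + 2 - 2 = m := rfl
    simp only [h1, h2, hT, pow_succ, Module.End.mul_apply, map_add, map_sub,
      lie_add, add_lie, lie_sub, sub_lie, pow_zero, Module.End.one_apply, comm]
    abel
  refine ⟨main, fun h0 => ?_⟩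
  intro k
  induction k using Nat.strong_induction_on with
  | _ k ih =>
    match k, ih with
    | 0, _ => intro x y; simp [hT]
    | 1, _ => intro x y; simpa using h0 x y
    | (m + 2), ih =>
      intro x y
      rw [main (m + 2) (by omega) x y]
      have hm1 := ih (m + 1) (by omega)
      have hm2 := ih m (by omega)
      simp [hm1, hm2, h0]
end

section
/- Let n be a Nijenhuis operator on a Lie algebra (g,[·,·]), and denote [·,·]_i the bracket deformed by n^i. Then for all integers k, i ≥ 0 and ξ₁,ξ₂ ∈ g: n^i [ξ₁,ξ₂]_{k+i} = [n^i ξ₁, n^i ξ₂]_k, where [ξ₁,ξ₂]_j = [n^jξ₁,ξ₂] + [ξ₁,n^jξ₂] − n^j[ξ₁,ξ₂] and [·,·]_0 = [·,·]. -/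
/-- For a Nijenhuis operator `n`, `n^i [ξ₁,ξ₂]_{k+i} = [n^i ξ₁, n^i ξ₂]_k`,
where `[·,·]_j` is the bracket deformed by `n^j`. -/
theorem pow_deformed_bracket
    {g : Type*} [LieRing g] [LieAlgebra ℝ g]
    (n : Module.End ℝ g)
    (hN : ∀ x y, n (⁅n x, y⁆ + ⁅x, n y⁆ - n ⁅x, y⁆) = ⁅n x, n y⁆)
    (br : ℕ → g → g → g)
    (hbr : ∀ j x y, br j x y = ⁅(n ^ j) x, y⁆ + ⁅x, (n ^ j) y⁆ - (n ^ j) ⁅x, y⁆) :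
    ∀ (k i : ℕ) (ξ₁ ξ₂ : g),
      (n ^ i) (br (k + i) ξ₁ ξ₂) = br k ((n ^ i) ξ₁) ((n ^ i) ξ₂) := by
  have comm : ∀ (m : ℕ) (z : g), n ((n ^ m) z) = (n ^ m) (n z) := by
    intro m z
    rw [← Module.End.mul_apply, ← Module.End.mul_apply, ← pow_succ, ← pow_succ']
  have key : ∀ j x y, n (br (j + 1) x y) = br j (n x) (n y) := by
    intro j
    induction j with
    | zero =>
      intro x y
      simp only [hbr, zero_add, pow_one, pow_zero, Module.End.one_apply]
      rw [hN]
      abel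
    | succ j IH =>
      intro x y
      have h1 := hN ((n ^ (j + 1)) x) y
      have h2 := hN x ((n ^ (j + 1)) y)
      have h3 := congrArg n (IH x y)
      simp only [hbr, pow_succ, Module.End.mul_apply, map_add, map_sub, comm] at h1 h2 h3 ⊢
      have H : ∀ a1 b1 a2 b2 a3 b3 L R : g, a1 = b1 → a2 = b2 → a3 = b3 →
          L - R = (a1 - b1) + (a2 - b2) + (a3 - b3) → L = R := by
        intro a1 b1 a2 b2 a3 b3 L R e1 e2 e3 h
        rw [e1, e2, e3] at h; simpa [sub_eq_zero] using h
      refine H _ _ _ _ _ _ _ _ h1 h2 h3 ?_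
      abel
  intro k i
  induction i with
  | zero => simp
  | succ i IH =>
    intro ξ₁ ξ₂
    have : k + (i + 1) = (k + i) + 1 := by omega
    rw [this, pow_succ, Module.End.mul_apply, Module.End.mul_apply, Module.End.mul_apply,
      key, IH]
end

section
/- Let n be a Nijenhuis operator on a Lie algebra (g,[·,·]). Define ad^{n^i}_ξ(ζ) = [ξ,ζ]_{n^i} where [·,·]_{n^i} is the bracket deformed by n^i. Then the recurrence ad^{n^i}_ξ = [ad^{n^{i−1}}_ξ, n] + ad^{n^{i−1}}_{nξ} holds, where [A,B] = A∘B − B∘A; equivalently, ad^{n^i}_ξ = [ad^n_ξ, n^{i−1}] + ad^n_{n^{i−1}ξ}. -/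
private lemma nij_pow_compat
    {g : Type*} [LieRing g] [LieAlgebra ℝ g]
    (n : Module.End ℝ g)
    (hN : ∀ x y, n (⁅n x, y⁆ + ⁅x, n y⁆ - n ⁅x, y⁆) = ⁅n x, n y⁆) :
    ∀ (j : ℕ) (x y : g),
      ⁅n x, (n ^ j) y⁆ + ⁅(n ^ j) x, n y⁆
        = (n ^ j) (⁅n x, y⁆ + ⁅x, n y⁆ - n ⁅x, y⁆)
          + n (⁅(n ^ j) x, y⁆ + ⁅x, (n ^ j) y⁆ - (n ^ j) ⁅x, y⁆) := by
  intro j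
  induction j with
  | zero => intro x y; simp
  | succ j ih =>
    intro x y
    have hc : ∀ z : g, (n ^ j) (n z) = n ((n ^ j) z) := fun z => by
      rw [← Module.End.mul_apply, ← pow_succ, pow_succ', Module.End.mul_apply]
    have hs : ∀ z : g, (n ^ (j + 1)) z = n ((n ^ j) z) := fun z => by
      rw [pow_succ', Module.End.mul_apply]
    have h1 : ⁅n x, (n ^ (j + 1)) y⁆
        = n (⁅n x, (n ^ j) y⁆ + ⁅x, n ((n ^ j) y)⁆ - n ⁅x, (n ^ j) y⁆) := by
      rw [hs]; exact (hN x ((n ^ j) y)).symm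
    have h2 : ⁅(n ^ (j + 1)) x, n y⁆
        = n (⁅n ((n ^ j) x), y⁆ + ⁅(n ^ j) x, n y⁆ - n ⁅(n ^ j) x, y⁆) := by
      rw [hs]; exact (hN ((n ^ j) x) y).symm
    rw [h1, h2, ← map_add n, show
        (⁅n x, (n ^ j) y⁆ + ⁅x, n ((n ^ j) y)⁆ - n ⁅x, (n ^ j) y⁆)
          + (⁅n ((n ^ j) x), y⁆ + ⁅(n ^ j) x, n y⁆ - n ⁅(n ^ j) x, y⁆)
        = (⁅n x, (n ^ j) y⁆ + ⁅(n ^ j) x, n y⁆)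
          + (⁅x, n ((n ^ j) y)⁆ + ⁅n ((n ^ j) x), y⁆
              - n ⁅x, (n ^ j) y⁆ - n ⁅(n ^ j) x, y⁆) from by abel, ih x y]
    simp only [map_add, map_sub, hc, hs]
    abel

/-- Recurrence for the adjoint representations of the iterated deformed
brackets: `ad^{n^i}_ξ = [ad^{n^{i−1}}_ξ, n] + ad^{n^{i−1}}_{nξ}`, and
equivalently `ad^{n^i}_ξ = [ad^n_ξ, n^{i−1}] + ad^n_{n^{i−1}ξ}`. -/
theorem ad_pow_recurrence
    {g : Type*} [LieRing g] [LieAlgebra ℝ g]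
    (n : Module.End ℝ g)
    (hN : ∀ x y, n (⁅n x, y⁆ + ⁅x, n y⁆ - n ⁅x, y⁆) = ⁅n x, n y⁆)
    (br : ℕ → g → g → g)
    (hbr : ∀ j x y, br j x y = ⁅(n ^ j) x, y⁆ + ⁅x, (n ^ j) y⁆ - (n ^ j) ⁅x, y⁆) :
    ∀ i : ℕ, 1 ≤ i → ∀ ξ ζ : g,
      (br i ξ ζ = br (i - 1) ξ (n ζ) - n (br (i - 1) ξ ζ) + br (i - 1) (n ξ) ζ)
      ∧ (br i ξ ζ
          = br 1 ξ ((n ^ (i - 1)) ζ) - (n ^ (i - 1)) (br 1 ξ ζ)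
            + br 1 ((n ^ (i - 1)) ξ) ζ) := by
  intro i hi ξ ζ
  obtain ⟨j, rfl⟩ : ∃ j, i = j + 1 := ⟨i - 1, (Nat.succ_pred_eq_of_pos hi).symm⟩
  have hc : ∀ z : g, (n ^ j) (n z) = n ((n ^ j) z) := fun z => by
    rw [← Module.End.mul_apply, ← pow_succ, pow_succ', Module.End.mul_apply]
  have hs : ∀ z : g, (n ^ (j + 1)) z = n ((n ^ j) z) := fun z => by
    rw [pow_succ', Module.End.mul_apply]
  have key := nij_pow_compat n hN j ξ ζ
  simp only [map_add, map_sub, hc, hs] at key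
  have key0 := sub_eq_zero.mpr key.symm
  constructor
  · simp only [hbr, Nat.add_sub_cancel, pow_one, map_add, map_sub, hc, hs]
    rw [← sub_eq_zero, ← key0]
    abel
  · simp only [hbr, Nat.add_sub_cancel, pow_one, map_add, map_sub, hc, hs]
    rw [← sub_eq_zero, ← key0]
    abel
end

section
/- Let (g,[·,·]) be a finite-dimensional Lie algebra and r, r' ∈ ∧²g two solutions of the classical Yang–Baxter equation with r non-degenerate (𝚛: g* → g an isomorphism). If r and r' are compatible, i.e. ⟦r',r⟧ = 0, then the linear map n = 𝚛' ∘ 𝚛^{−1}: g → g is a Nijenhuis operator on g, i.e. [nξ₁,nξ₂] = n([nξ₁,ξ₂] + [ξ₁,nξ₂] − n[ξ₁,ξ₂]) for all ξ₁,ξ₂ ∈ g. -/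
/-- The functional `ξ ↦ η₂ ⁅ξ, a⁆ - η₁ ⁅ξ, b⁆`. -/
noncomputable def cobr {g : Type*} [LieRing g] [LieAlgebra ℝ g]
    (η₁ η₂ : Module.Dual ℝ g) (a b : g) : Module.Dual ℝ g :=
  -(η₂ ∘ₗ (LieAlgebra.ad ℝ g a)) + (η₁ ∘ₗ (LieAlgebra.ad ℝ g b))

lemma cobr_apply {g : Type*} [LieRing g] [LieAlgebra ℝ g]
    (η₁ η₂ : Module.Dual ℝ g) (a b : g) (ξ : g) :
    cobr η₁ η₂ a b ξ = η₂ ⁅ξ, a⁆ - η₁ ⁅ξ, b⁆ := by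
  simp only [cobr, LinearMap.add_apply, LinearMap.neg_apply, LinearMap.coe_comp,
    Function.comp_apply, LieAlgebra.ad_apply, ← lie_skew ξ a, ← lie_skew ξ b, map_neg]
  ring

/-- Key mixed identity: if `A, B` are skew and their mixed Schouten bracket
vanishes, then `⁅Aη₁,Bη₂⁆ + ⁅Bη₁,Aη₂⁆ = A (cobr of B's) + B (cobr of A's)`. -/
lemma mixed_key {g : Type*} [LieRing g] [LieAlgebra ℝ g] [FiniteDimensional ℝ g]
    (A B : Module.Dual ℝ g →ₗ[ℝ] g)
    (hsA : ∀ η₁ η₂ : Module.Dual ℝ g, η₂ (A η₁) = - η₁ (A η₂))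
    (hsB : ∀ η₁ η₂ : Module.Dual ℝ g, η₂ (B η₁) = - η₁ (B η₂))
    (h : ∀ η₁ η₂ η₃ : Module.Dual ℝ g,
      η₁ (⁅A η₂, B η₃⁆ + ⁅B η₂, A η₃⁆) - η₂ (⁅A η₁, B η₃⁆ + ⁅B η₁, A η₃⁆)
        + η₃ (⁅A η₁, B η₂⁆ + ⁅B η₁, A η₂⁆) = 0)
    (η₁ η₂ : Module.Dual ℝ g) :
    ⁅A η₁, B η₂⁆ + ⁅B η₁, A η₂⁆
      = A (cobr η₁ η₂ (B η₁) (B η₂)) + B (cobr η₁ η₂ (A η₁) (A η₂)) := by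
  rw [← sub_eq_zero, ← Module.forall_dual_apply_eq_zero_iff ℝ]
  intro η₃
  have h1 := hsA (cobr η₁ η₂ (B η₁) (B η₂)) η₃
  have h2 := hsB (cobr η₁ η₂ (A η₁) (A η₂)) η₃
  have h3 := h η₁ η₂ η₃
  have e1 := cobr_apply η₁ η₂ (B η₁) (B η₂) (A η₃)
  have e2 := cobr_apply η₁ η₂ (A η₁) (A η₂) (B η₃)
  simp only [map_add, map_sub, map_neg] at *
  rw [e1] at h1; rw [e2] at h2
  rw [← lie_skew (A η₃) (B η₁), ← lie_skew (A η₃) (B η₂)] at h1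
  rw [← lie_skew (B η₃) (A η₁), ← lie_skew (B η₃) (A η₂)] at h2
  simp only [map_neg] at h1 h2
  linarith

/-- If `r, r'` are compatible solutions of the classical Yang–Baxter equation
with `r` non-degenerate, then `n = 𝚛' ∘ 𝚛⁻¹` is a Nijenhuis operator. -/
theorem compatible_r_matrices_give_nijenhuis
    {g : Type*} [LieRing g] [LieAlgebra ℝ g] [FiniteDimensional ℝ g]
    (rmap rmap' : Module.Dual ℝ g →ₗ[ℝ] g)
    (hskew : ∀ η₁ η₂ : Module.Dual ℝ g, η₂ (rmap η₁) = - η₁ (rmap η₂))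
    (hskew' : ∀ η₁ η₂ : Module.Dual ℝ g, η₂ (rmap' η₁) = - η₁ (rmap' η₂))
    -- ⟦r,r⟧ = 0
    (hr : ∀ η₁ η₂ η₃ : Module.Dual ℝ g,
      η₁ ⁅rmap η₂, rmap η₃⁆ - η₂ ⁅rmap η₁, rmap η₃⁆ + η₃ ⁅rmap η₁, rmap η₂⁆ = 0)
    -- ⟦r',r'⟧ = 0
    (hr' : ∀ η₁ η₂ η₃ : Module.Dual ℝ g,
      η₁ ⁅rmap' η₂, rmap' η₃⁆ - η₂ ⁅rmap' η₁, rmap' η₃⁆ + η₃ ⁅rmap' η₁, rmap' η₂⁆ = 0)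
    -- compatibility ⟦r',r⟧ = 0, via ⟦r+r',r+r'⟧ − ⟦r,r⟧ − ⟦r',r'⟧ = 0
    (hcomp : ∀ η₁ η₂ η₃ : Module.Dual ℝ g,
      η₁ ⁅(rmap + rmap') η₂, (rmap + rmap') η₃⁆
        - η₂ ⁅(rmap + rmap') η₁, (rmap + rmap') η₃⁆
        + η₃ ⁅(rmap + rmap') η₁, (rmap + rmap') η₂⁆ = 0)
    -- non-degeneracy of r
    (hbij : Function.Bijective rmap)
    (n : g →ₗ[ℝ] g)
    (hn : ∀ η, n (rmap η) = rmap' η) :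
    ∀ ξ₁ ξ₂ : g, ⁅n ξ₁, n ξ₂⁆ = n (⁅n ξ₁, ξ₂⁆ + ⁅ξ₁, n ξ₂⁆ - n ⁅ξ₁, ξ₂⁆) := by
  -- mixed Schouten condition for (rmap, rmap')
  have hmix : ∀ η₁ η₂ η₃ : Module.Dual ℝ g,
      η₁ (⁅rmap η₂, rmap' η₃⁆ + ⁅rmap' η₂, rmap η₃⁆)
        - η₂ (⁅rmap η₁, rmap' η₃⁆ + ⁅rmap' η₁, rmap η₃⁆)
        + η₃ (⁅rmap η₁, rmap' η₂⁆ + ⁅rmap' η₁, rmap η₂⁆) = 0 := by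
    intro η₁ η₂ η₃
    have h1 := hcomp η₁ η₂ η₃
    have h2 := hr η₁ η₂ η₃
    have h3 := hr' η₁ η₂ η₃
    simp only [LinearMap.add_apply, add_lie, lie_add, map_add] at h1 ⊢
    linarith
  -- doubled Schouten conditions for (rmap, rmap) and (rmap', rmap')
  have hAA : ∀ η₁ η₂ η₃ : Module.Dual ℝ g,
      η₁ (⁅rmap η₂, rmap η₃⁆ + ⁅rmap η₂, rmap η₃⁆)
        - η₂ (⁅rmap η₁, rmap η₃⁆ + ⁅rmap η₁, rmap η₃⁆)
        + η₃ (⁅rmap η₁, rmap η₂⁆ + ⁅rmap η₁, rmap η₂⁆) = 0 := by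
    intro η₁ η₂ η₃
    have := hr η₁ η₂ η₃
    simp only [map_add]
    linarith
  have hBB : ∀ η₁ η₂ η₃ : Module.Dual ℝ g,
      η₁ (⁅rmap' η₂, rmap' η₃⁆ + ⁅rmap' η₂, rmap' η₃⁆)
        - η₂ (⁅rmap' η₁, rmap' η₃⁆ + ⁅rmap' η₁, rmap' η₃⁆)
        + η₃ (⁅rmap' η₁, rmap' η₂⁆ + ⁅rmap' η₁, rmap' η₂⁆) = 0 := by
    intro η₁ η₂ η₃
    have := hr' η₁ η₂ η₃
    simp only [map_add]
    linarith
  intro ξ₁ ξ₂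
  obtain ⟨η₁, rfl⟩ := hbij.2 ξ₁
  obtain ⟨η₂, rfl⟩ := hbij.2 ξ₂
  have keyAA := mixed_key rmap rmap hskew hskew hAA η₁ η₂
  have keyBB := mixed_key rmap' rmap' hskew' hskew' hBB η₁ η₂
  have keyAB := mixed_key rmap rmap' hskew hskew' hmix η₁ η₂
  -- halve the doubled identities
  have hAA' : ⁅rmap η₁, rmap η₂⁆ = rmap (cobr η₁ η₂ (rmap η₁) (rmap η₂)) := by
    have h2 : (2:ℝ) • ⁅rmap η₁, rmap η₂⁆
        = (2:ℝ) • rmap (cobr η₁ η₂ (rmap η₁) (rmap η₂)) := by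
      rw [two_smul, two_smul]; exact keyAA
    exact smul_right_injective g (by norm_num) h2
  have hBB' : ⁅rmap' η₁, rmap' η₂⁆ = rmap' (cobr η₁ η₂ (rmap' η₁) (rmap' η₂)) := by
    have h2 : (2:ℝ) • ⁅rmap' η₁, rmap' η₂⁆
        = (2:ℝ) • rmap' (cobr η₁ η₂ (rmap' η₁) (rmap' η₂)) := by
      rw [two_smul, two_smul]; exact keyBB
    exact smul_right_injective g (by norm_num) h2
  rw [hn η₁, hn η₂]
  have : ⁅rmap' η₁, rmap η₂⁆ + ⁅rmap η₁, rmap' η₂⁆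
      = rmap (cobr η₁ η₂ (rmap' η₁) (rmap' η₂)) + rmap' (cobr η₁ η₂ (rmap η₁) (rmap η₂)) := by
    rw [add_comm ⁅rmap' η₁, rmap η₂⁆]; exact keyAB
  rw [this, hAA', hn, map_sub, map_add, hn, hBB']
  abel
end

section
/- Let (g,[·,·]) be a finite-dimensional Lie algebra, r ∈ ∧²g a solution of the classical Yang–Baxter equation, and n: g → g a linear map such that (i) n ∘ 𝚛 = 𝚛 ∘ ᵗn, and (ii) the concomitant C(r,n)(η₁,η₂) = [ᵗn, ad*_{𝚛η₁}]η₂ − [ᵗn, ad*_{𝚛η₂}]η₁ vanishes for all η₁,η₂ ∈ g*. Then nr (defined by (nr)^♯ = n∘𝚛) is a solution of the classical Yang–Baxter equation if and only if the Nijenhuis torsion of n vanishes on the image of 𝚛: T(n)(𝚛η₁, 𝚛η₂) = 0 for all η₁,η₂ ∈ g*. -/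
/-- Under conditions (i) `n∘𝚛 = 𝚛∘ᵗn` and (ii) vanishing of the concomitant
`C(r,n)`, the element `nr` is a solution of the classical Yang–Baxter
equation iff the Nijenhuis torsion of `n` vanishes on the image of `𝚛`. -/
theorem nr_cybe_iff_torsion_vanishes_on_image
    {g : Type*} [LieRing g] [LieAlgebra ℝ g] [FiniteDimensional ℝ g]
    (rmap : Module.Dual ℝ g →ₗ[ℝ] g)
    (hskew : ∀ η₁ η₂ : Module.Dual ℝ g, η₂ (rmap η₁) = - η₁ (rmap η₂))
    (brR : Module.Dual ℝ g → Module.Dual ℝ g → Module.Dual ℝ g)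
    (hbr : ∀ η₁ η₂ ξ, brR η₁ η₂ ξ = η₂ ⁅ξ, rmap η₁⁆ - η₁ ⁅ξ, rmap η₂⁆)
    -- r is a CYBE solution
    (hcybe : ∀ η₁ η₂, rmap (brR η₁ η₂) = -⁅rmap η₁, rmap η₂⁆)
    (n : g →ₗ[ℝ] g)
    -- coadjoint action
    (coad : g → Module.Dual ℝ g → Module.Dual ℝ g)
    (hcoad : ∀ ξ η ζ, coad ξ η ζ = - η ⁅ξ, ζ⁆)
    -- (i) n ∘ 𝚛 = 𝚛 ∘ ᵗn
    (hi : ∀ η, n (rmap η) = rmap (n.dualMap η))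
    -- (ii) vanishing of the concomitant C(r,n)
    (hii : ∀ η₁ η₂ : Module.Dual ℝ g,
      n.dualMap (coad (rmap η₁) η₂) - coad (rmap η₁) (n.dualMap η₂)
        - (n.dualMap (coad (rmap η₂) η₁) - coad (rmap η₂) (n.dualMap η₁)) = 0)
    (brNR : Module.Dual ℝ g → Module.Dual ℝ g → Module.Dual ℝ g)
    (hbrNR : ∀ η₁ η₂ ξ, brNR η₁ η₂ ξ = η₂ ⁅ξ, n (rmap η₁)⁆ - η₁ ⁅ξ, n (rmap η₂)⁆) :
    -- nr is a CYBE solution iff T(n) vanishes on the image of 𝚛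
    (∀ η₁ η₂, n (rmap (brNR η₁ η₂)) = -⁅n (rmap η₁), n (rmap η₂)⁆)
    ↔ (∀ η₁ η₂ : Module.Dual ℝ g,
        n (⁅n (rmap η₁), rmap η₂⁆ + ⁅rmap η₁, n (rmap η₂)⁆ - n ⁅rmap η₁, rmap η₂⁆)
          - ⁅n (rmap η₁), n (rmap η₂)⁆ = 0) := by
  have hfun : ∀ η₁ η₂ : Module.Dual ℝ g, brNR η₁ η₂
      = brR (n.dualMap η₁) η₂ + brR η₁ (n.dualMap η₂) - n.dualMap (brR η₁ η₂) := by
    intro η₁ η₂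
    ext ξ
    have h2 := congrArg (fun f : Module.Dual ℝ g => f ξ) (hii η₁ η₂)
    simp only [LinearMap.sub_apply, LinearMap.dualMap_apply, hcoad, LinearMap.zero_apply] at h2
    have e1 : ⁅rmap η₁, n ξ⁆ = -⁅n ξ, rmap η₁⁆ := (lie_skew _ _).symm
    have e2 : ⁅rmap η₂, n ξ⁆ = -⁅n ξ, rmap η₂⁆ := (lie_skew _ _).symm
    have e3 : ⁅rmap η₁, ξ⁆ = -⁅ξ, rmap η₁⁆ := (lie_skew _ _).symm
    have e4 : ⁅rmap η₂, ξ⁆ = -⁅ξ, rmap η₂⁆ := (lie_skew _ _).symm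
    rw [e1, e2, e3, e4] at h2
    simp only [map_neg, LinearMap.map_neg] at h2
    simp only [LinearMap.sub_apply, LinearMap.add_apply, LinearMap.dualMap_apply,
      hbr, hbrNR, hi]
    linarith
  have hmain : ∀ η₁ η₂ : Module.Dual ℝ g, n (rmap (brNR η₁ η₂))
      = - n (⁅n (rmap η₁), rmap η₂⁆ + ⁅rmap η₁, n (rmap η₂)⁆ - n ⁅rmap η₁, rmap η₂⁆) := by
    intro η₁ η₂
    rw [hfun, map_sub, map_add, hcybe, hcybe, ← hi, ← hi, ← hi, hcybe]
    simp only [map_sub, map_add, map_neg]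
    abel
  constructor
  · intro h η₁ η₂
    have := h η₁ η₂
    rw [hmain] at this
    have h3 : n (⁅n (rmap η₁), rmap η₂⁆ + ⁅rmap η₁, n (rmap η₂)⁆ - n ⁅rmap η₁, rmap η₂⁆)
        = ⁅n (rmap η₁), n (rmap η₂)⁆ := neg_injective this
    rw [h3, sub_self]
  · intro h η₁ η₂
    rw [hmain]
    have := h η₁ η₂
    rw [sub_eq_zero] at this
    rw [this]
end

section
/- Let (g,[·,·],δ) be a Lie bialgebra (δ: g → ∧²g a 1-cocycle for ad^{(2)} whose transpose is a Lie bracket on g*) and n: g → g a Nijenhuis operator. Define δ_{ᵗn} = ι_{ᵗn}∘δ − δ∘n. Then δ_{ᵗn} is a 1-cocycle for ad^{(2)} of (g,[·,·]) if and only if δ is a 1-cocycle in the deformed cohomology, i.e. for all ξ₁,ξ₂ ∈ g: ι_{[ᵗn,ad*_{ξ₁}]} δ(ξ₂) − ι_{[ᵗn,ad*_{ξ₂}]} δ(ξ₁) + ad^{(2)}_{nξ₁}δ(ξ₂) − ad^{(2)}_{nξ₂}δ(ξ₁) − δ([ξ₁,ξ₂]_n) = 0. -/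
/-- For a Lie bialgebra `(g,[·,·],δ)` and a Nijenhuis operator `n`, the
deformed cochain `δ_{ᵗn} = ι_{ᵗn}∘δ − δ∘n` is a 1-cocycle for `ad^{(2)}` iff
`δ` is a 1-cocycle in the deformed cohomology. -/
theorem delta_tn_cocycle_iff_deformed_cocycle
    {g : Type*} [LieRing g] [LieAlgebra ℝ g] [FiniteDimensional ℝ g]
    (n : g →ₗ[ℝ] g)
    (hN : ∀ x y : g, n (⁅n x, y⁆ + ⁅x, n y⁆ - n ⁅x, y⁆) = ⁅n x, n y⁆)
    (δ : g →ₗ[ℝ] Module.Dual ℝ g →ₗ[ℝ] Module.Dual ℝ g →ₗ[ℝ] ℝ)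
    (hskew : ∀ ξ η₁ η₂, δ ξ η₁ η₂ = - δ ξ η₂ η₁)
    -- the transpose of δ is a Lie bracket on g*
    (brD : Module.Dual ℝ g → Module.Dual ℝ g → Module.Dual ℝ g)
    (hbrD : ∀ η₁ η₂ ξ, brD η₁ η₂ ξ = δ ξ η₁ η₂)
    (hJacD : ∀ η₁ η₂ η₃,
      brD (brD η₁ η₂) η₃ + brD (brD η₃ η₁) η₂ + brD (brD η₂ η₃) η₁ = 0)
    -- coadjoint action
    (coad : g → Module.Dual ℝ g → Module.Dual ℝ g)
    (hcoad : ∀ ξ η ζ, coad ξ η ζ = - η ⁅ξ, ζ⁆)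
    -- δ is a 1-cocycle for ad^{(2)}
    (hcocycle : ∀ (ξ₁ ξ₂ : g) (η₁ η₂ : Module.Dual ℝ g),
      δ ⁅ξ₁, ξ₂⁆ η₁ η₂
        = δ ξ₂ (coad ξ₁ η₁) η₂ + δ ξ₂ η₁ (coad ξ₁ η₂)
          - δ ξ₁ (coad ξ₂ η₁) η₂ - δ ξ₁ η₁ (coad ξ₂ η₂))
    -- the deformed cochain δ_{ᵗn}
    (dtn : g → Module.Dual ℝ g → Module.Dual ℝ g → ℝ)
    (hdtn : ∀ ξ η₁ η₂, dtn ξ η₁ η₂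
      = δ ξ (n.dualMap η₁) η₂ + δ ξ η₁ (n.dualMap η₂) - δ (n ξ) η₁ η₂) :
    -- δ_{ᵗn} is a 1-cocycle for ad^{(2)} iff δ is a 1-cocycle for the
    -- deformed cohomology
    (∀ (ξ₁ ξ₂ : g) (η₁ η₂ : Module.Dual ℝ g),
      dtn ⁅ξ₁, ξ₂⁆ η₁ η₂
        = dtn ξ₂ (coad ξ₁ η₁) η₂ + dtn ξ₂ η₁ (coad ξ₁ η₂)
          - dtn ξ₁ (coad ξ₂ η₁) η₂ - dtn ξ₁ η₁ (coad ξ₂ η₂))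
    ↔
    (∀ (ξ₁ ξ₂ : g) (η₁ η₂ : Module.Dual ℝ g),
      (δ ξ₂ (n.dualMap (coad ξ₁ η₁) - coad ξ₁ (n.dualMap η₁)) η₂
          + δ ξ₂ η₁ (n.dualMap (coad ξ₁ η₂) - coad ξ₁ (n.dualMap η₂)))
        - (δ ξ₁ (n.dualMap (coad ξ₂ η₁) - coad ξ₂ (n.dualMap η₁)) η₂
          + δ ξ₁ η₁ (n.dualMap (coad ξ₂ η₂) - coad ξ₂ (n.dualMap η₂)))
        + (δ ξ₂ (coad (n ξ₁) η₁) η₂ + δ ξ₂ η₁ (coad (n ξ₁) η₂))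
        - (δ ξ₁ (coad (n ξ₂) η₁) η₂ + δ ξ₁ η₁ (coad (n ξ₂) η₂))
        - δ (⁅n ξ₁, ξ₂⁆ + ⁅ξ₁, n ξ₂⁆ - n ⁅ξ₁, ξ₂⁆) η₁ η₂ = 0) := by
  constructor
  · intro h ξ₁ ξ₂ η₁ η₂
    have h1 := h ξ₁ ξ₂ η₁ η₂
    simp only [map_sub, map_add, LinearMap.sub_apply, LinearMap.add_apply]
    linear_combination (-1 : ℝ) * h1
      + hdtn ⁅ξ₁, ξ₂⁆ η₁ η₂
      - hdtn ξ₂ (coad ξ₁ η₁) η₂ - hdtn ξ₂ η₁ (coad ξ₁ η₂)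
      + hdtn ξ₁ (coad ξ₂ η₁) η₂ + hdtn ξ₁ η₁ (coad ξ₂ η₂)
      + hcocycle ξ₁ ξ₂ (n.dualMap η₁) η₂ + hcocycle ξ₁ ξ₂ η₁ (n.dualMap η₂)
      - hcocycle (n ξ₁) ξ₂ η₁ η₂ - hcocycle ξ₁ (n ξ₂) η₁ η₂
  · intro h ξ₁ ξ₂ η₁ η₂
    have h2 := h ξ₁ ξ₂ η₁ η₂
    simp only [map_sub, map_add, LinearMap.sub_apply, LinearMap.add_apply] at h2
    linear_combination (-1 : ℝ) * h2
      + hdtn ⁅ξ₁, ξ₂⁆ η₁ η₂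
      - hdtn ξ₂ (coad ξ₁ η₁) η₂ - hdtn ξ₂ η₁ (coad ξ₁ η₂)
      + hdtn ξ₁ (coad ξ₂ η₁) η₂ + hdtn ξ₁ η₁ (coad ξ₂ η₂)
      + hcocycle ξ₁ ξ₂ (n.dualMap η₁) η₂ + hcocycle ξ₁ ξ₂ η₁ (n.dualMap η₂)
      - hcocycle (n ξ₁) ξ₂ η₁ η₂ - hcocycle ξ₁ (n ξ₂) η₁ η₂
end

section
/- Let n be a Nijenhuis operator on a Lie algebra (g,[·,·]) and δ: g → ∧²g a 1-cocycle (for ad^{(2)}). Define for k ≥ 1 the deformed cochain δ_{(ᵗn)^k} = ι_{(ᵗn)^k}∘δ − δ∘n^k. Assume the transpose ᵗn also has vanishing Nijenhuis torsion with respect to the dual Lie bracket [·,·]_{g*} = δ^t. Then the recurrence δ_{(ᵗn)^k}(ξ) = ι_{ᵗn} δ_{(ᵗn)^{k−1}}(ξ) − δ_{(ᵗn)^{k−1}}(nξ) holds for all ξ ∈ g and k ≥ 1 (with δ_{(ᵗn)^0} = δ). -/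
/-- Recurrence for the hierarchy of deformed 1-cochains:
`δ_{(ᵗn)^k}(ξ) = ι_{ᵗn} δ_{(ᵗn)^{k−1}}(ξ) − δ_{(ᵗn)^{k−1}}(nξ)` for `k ≥ 1`. -/
theorem deformed_cochain_recurrence
    {g : Type*} [LieRing g] [LieAlgebra ℝ g] [FiniteDimensional ℝ g]
    (n : Module.End ℝ g)
    -- n is Nijenhuis on (g,[·,·])
    (hN : ∀ x y : g, n (⁅n x, y⁆ + ⁅x, n y⁆ - n ⁅x, y⁆) = ⁅n x, n y⁆)
    (δ : g →ₗ[ℝ] Module.Dual ℝ g →ₗ[ℝ] Module.Dual ℝ g →ₗ[ℝ] ℝ)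
    (hskew : ∀ ξ η₁ η₂, δ ξ η₁ η₂ = - δ ξ η₂ η₁)
    -- the transpose of δ is a Lie bracket [·,·]_{g*} on g*
    (brD : Module.Dual ℝ g → Module.Dual ℝ g → Module.Dual ℝ g)
    (hbrD : ∀ η₁ η₂ ξ, brD η₁ η₂ ξ = δ ξ η₁ η₂)
    (hJacD : ∀ η₁ η₂ η₃,
      brD (brD η₁ η₂) η₃ + brD (brD η₃ η₁) η₂ + brD (brD η₂ η₃) η₁ = 0)
    -- coadjoint action and the cocycle condition for δ
    (coad : g → Module.Dual ℝ g → Module.Dual ℝ g)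
    (hcoad : ∀ ξ η ζ, coad ξ η ζ = - η ⁅ξ, ζ⁆)
    (hcocycle : ∀ (ξ₁ ξ₂ : g) (η₁ η₂ : Module.Dual ℝ g),
      δ ⁅ξ₁, ξ₂⁆ η₁ η₂
        = δ ξ₂ (coad ξ₁ η₁) η₂ + δ ξ₂ η₁ (coad ξ₁ η₂)
          - δ ξ₁ (coad ξ₂ η₁) η₂ - δ ξ₁ η₁ (coad ξ₂ η₂))
    -- ᵗn is Nijenhuis on (g*,[·,·]_{g*})
    (hNt : ∀ η₁ η₂ : Module.Dual ℝ g,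
      n.dualMap (brD (n.dualMap η₁) η₂ + brD η₁ (n.dualMap η₂)
          - n.dualMap (brD η₁ η₂))
        = brD (n.dualMap η₁) (n.dualMap η₂))
    -- the deformed cochains δ_{(ᵗn)^k} = ι_{(ᵗn)^k}∘δ − δ∘n^k
    (dk : ℕ → g → Module.Dual ℝ g → Module.Dual ℝ g → ℝ)
    (hdk : ∀ k ξ η₁ η₂, dk k ξ η₁ η₂
      = δ ξ ((n.dualMap ^ k) η₁) η₂ + δ ξ η₁ ((n.dualMap ^ k) η₂)
        - δ ((n ^ k) ξ) η₁ η₂) :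
    ∀ k : ℕ, 1 ≤ k → ∀ (ξ : g) (η₁ η₂ : Module.Dual ℝ g),
      dk k ξ η₁ η₂
        = dk (k - 1) ξ (n.dualMap η₁) η₂ + dk (k - 1) ξ η₁ (n.dualMap η₂)
          - dk (k - 1) (n ξ) η₁ η₂ := by
  intro k hk ξ η₁ η₂
  obtain ⟨m, rfl⟩ : ∃ m, k = m + 1 := ⟨k - 1, (Nat.succ_pred_eq_of_pos hk).symm⟩
  -- key hierarchy identity for the Nijenhuis operator ᵗn, proved pointwise by induction
  have star : ∀ (m : ℕ) (η₁ η₂ : Module.Dual ℝ g) (ζ : g),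
      brD (n.dualMap η₁) ((n.dualMap ^ m) η₂) ζ
        + brD ((n.dualMap ^ m) η₁) (n.dualMap η₂) ζ
      = brD (n.dualMap η₁) η₂ ((n ^ m) ζ) + brD η₁ (n.dualMap η₂) ((n ^ m) ζ)
        + brD ((n.dualMap ^ m) η₁) η₂ (n ζ) + brD η₁ ((n.dualMap ^ m) η₂) (n ζ)
        - brD η₁ η₂ ((n ^ (m + 1)) ζ) - brD η₁ η₂ ((n ^ (m + 1)) ζ) := by
    intro m
    induction m with
    | zero =>
      intro η₁ η₂ ζ
      simp only [pow_zero, pow_one, Module.End.one_apply]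
      have e1 : ∀ (φ : Module.Dual ℝ g), n.dualMap φ ζ = φ (n ζ) := fun _ => rfl
      rw [zero_add, pow_one]; ring
    | succ m ih =>
      intro η₁ η₂ ζ
      have hcomm : ∀ η : Module.Dual ℝ g,
          n.dualMap ((n.dualMap ^ m) η) = (n.dualMap ^ m) (n.dualMap η) := by
        intro η
        rw [← Module.End.mul_apply, ← pow_succ', pow_succ, Module.End.mul_apply]
      have h1 := congrArg (fun φ : Module.Dual ℝ g => φ ζ)
        (hNt ((n.dualMap ^ m) η₁) η₂)
      have h2 := congrArg (fun φ : Module.Dual ℝ g => φ ζ)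
        (hNt η₁ ((n.dualMap ^ m) η₂))
      have h3 := ih η₁ η₂ (n ζ)
      simp only [LinearMap.dualMap_apply, LinearMap.add_apply, LinearMap.sub_apply,
        hcomm] at h1 h2
      simp only [pow_succ, Module.End.mul_apply] at h3 ⊢
      linarith [h1, h2, h3]
  simp only [hdk, Nat.add_sub_cancel]
  simp only [← hbrD]
  simp only [pow_succ, Module.End.mul_apply]
  have hstar := star m η₁ η₂ ξ
  simp only [pow_succ, Module.End.mul_apply] at hstar
  linarith [hstar]
end
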